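/- arXiv:1902.10930 — 2 statements merged into one kernel-verified Lean document; each statement's English description precedes it below -/
import Mathlib

section
/- In a Hadamard space (X,d), for any four points x, y, v, w the inequality d(x,v)^2 + d(y,w)^2 ≤ d(x,w)^2 + d(y,v)^2 + 2 d(x,y) d(v,w) holds. -/
open Set

/-- A geodesic segment from `x` to `y`, parametrized proportionally to arclength on `[0,1]`. -/
structure IsGeodesicSeg {X : Type*} [MetricSpace X] (γ : ℝ → X) (x y : X) : Prop where
  src : γ 0 = x
  tgt : γ 1 = y
  dist_eq : ∀ s ∈ Set.Icc (0:ℝ) 1, ∀ t ∈ Set.Icc (0:ℝ) 1,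
    dist (γ s) (γ t) = |s - t| * dist x y

/-- A Hadamard space: a complete geodesic metric space satisfying the CAT(0)
comparison condition (formulated via the equivalent quadratic comparison inequality). -/
class HadamardSpace (X : Type*) extends MetricSpace X, CompleteSpace X where
  geod : X → X → ℝ → X
  geod_spec : ∀ x y : X, IsGeodesicSeg (geod x y) x y
  cat0 : ∀ x y z : X, ∀ t ∈ Set.Icc (0:ℝ) 1,
    dist z (geod x y t) ^ 2 ≤
      (1 - t) * dist z x ^ 2 + t * dist z y ^ 2 - t * (1 - t) * dist x y ^ 2

private lemma le_of_sq_le_sq' (u v : ℝ) (hu : 0 ≤ u) (hv : 0 ≤ v) (h : u^2 ≤ v^2) : u ≤ v := by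
  nlinarith

private lemma cs_aux (E F a b c d : ℝ) (hE : 0 ≤ E) (hF : 0 ≤ F)
    (hE2 : E^2 = a^2 + b^2) (hF2 : F^2 = c^2 + d^2) : a*c + b*d ≤ E*F := by
  rcases le_or_gt (a*c + b*d) 0 with h | h
  · exact h.trans (mul_nonneg hE hF)
  · have e : (E*F)^2 = (a^2+b^2)*(c^2+d^2) := by rw [mul_pow, hE2, hF2]
    have h2 : (a*c+b*d)^2 ≤ (E*F)^2 := by nlinarith [sq_nonneg (a*d - b*c)]
    exact le_of_sq_le_sq' _ _ h.le (mul_nonneg hE hF) h2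

private lemma final_ii (A y1 E C D F B : ℝ) (hB0 : 0 ≤ B) (hE : 0 ≤ E) (hC : 0 ≤ C)
    (hB : B ≤ E + C) (hEC : E*C + A*y1 ≤ E*F) (hD2 : D^2 = E^2 + A^2 - 2*A*y1) :
    A^2 + B^2 ≤ C^2 + D^2 + 2*E*F := by
  nlinarith [mul_nonneg (sub_nonneg.2 hB) (by linarith : (0:ℝ) ≤ E + C + B)]

private lemma sq_eq_of_eq_sq (u v : ℝ) (hu : 0 ≤ u) (hv : 0 ≤ v) (h : u^2 = v^2) : u = v :=
  le_antisymm (le_of_sq_le_sq' _ _ hu hv (le_of_eq h))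
    (le_of_sq_le_sq' _ _ hv hu (le_of_eq h.symm))

set_option maxHeartbeats 1600000 in
private lemma caseii_aux (A y1 y2 w1 w2 E C F : ℝ)
    (hA : 0 ≤ A) (hE : 0 ≤ E) (hC : 0 ≤ C) (hF : 0 ≤ F)
    (hy2 : 0 ≤ y2) (hw2 : w2 ≤ 0)
    (hE2 : E^2 = y1^2 + y2^2) (hC2 : C^2 = w1^2 + w2^2)
    (hF2 : F^2 = (w1 - A)^2 + w2^2)
    (hcross : y2*w1 ≤ w2*y1) (hnd : 0 < y2 - w2) :
    E*C + A*y1 ≤ E*F := by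
  -- unified: if C*y1 + w1*E ≤ 0 then squares argument works
  have main : C*y1 + w1*E ≤ 0 → E*C + A*y1 ≤ E*F := by
    intro key
    rcases le_or_gt (E*C + A*y1) 0 with h | h
    · exact h.trans (mul_nonneg hE hF)
    · have e : (E*F)^2 - (E*C + A*y1)^2 = A*(A*y2^2 - 2*E*(C*y1 + w1*E)) := by
        linear_combination E^2*hF2 - E^2*hC2 + A^2*hE2
      have hG : 0 ≤ A*(A*y2^2 - 2*E*(C*y1 + w1*E)) := by
        have := mul_nonneg hE (neg_nonneg.2 key)
        nlinarith [mul_nonneg hA (sq_nonneg y2)]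
      refine le_of_sq_le_sq' _ _ h.le (mul_nonneg hE hF) (by linarith)
  rcases le_total y1 0 with hy1 | hy1 <;> rcases le_total w1 0 with hw1 | hw1
  · -- y1 ≤ 0, w1 ≤ 0
    exact main (by nlinarith [mul_nonpos_of_nonneg_of_nonpos hC hy1,
      mul_nonpos_of_nonpos_of_nonneg hw1 hE])
  · -- y1 ≤ 0, w1 ≥ 0 : cross has both sides nonneg, squares give w1*E ≤ C*(-y1)
    have h1 : 0 ≤ y2*w1 := mul_nonneg hy2 hw1
    have hsq : (y2*w1)^2 ≤ (w2*y1)^2 := by nlinarith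
    have hsq2 : (w1*E)^2 ≤ (C*(-y1))^2 := by nlinarith
    have key : w1*E ≤ C*(-y1) :=
      le_of_sq_le_sq' _ _ (mul_nonneg hw1 hE) (mul_nonneg hC (by linarith)) hsq2
    exact main (by linarith)
  · -- y1 ≥ 0, w1 ≤ 0 : cross both sides nonpos
    have h1 : w2*y1 ≤ 0 := mul_nonpos_of_nonpos_of_nonneg hw2 hy1
    have hsq : (w2*y1)^2 ≤ (y2*w1)^2 := by nlinarith
    have hsq2 : (C*y1)^2 ≤ ((-w1)*E)^2 := by nlinarith
    have key : C*y1 ≤ (-w1)*E :=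
      le_of_sq_le_sq' _ _ (mul_nonneg hC hy1) (mul_nonneg (by linarith) hE) hsq2
    exact main (by linarith)
  · -- y1 ≥ 0, w1 ≥ 0: squeeze
    have h1 : 0 ≤ y2*w1 := mul_nonneg hy2 hw1
    have h2 : w2*y1 ≤ 0 := mul_nonpos_of_nonpos_of_nonneg hw2 hy1
    have h3 : y2*w1 = 0 := le_antisymm (by linarith) h1
    have h4 : w2*y1 = 0 := le_antisymm h2 (by linarith)
    rcases (mul_eq_zero.1 h4) with h5 | h5
    · -- w2 = 0, so y2 > 0, so w1 = 0
      have hy2pos : 0 < y2 := by linarith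
      have hw10 : w1 = 0 := by
        rcases mul_eq_zero.1 h3 with h | h
        · exact absurd h (by linarith)
        · exact h
      -- if y1 = 0 too? general: C^2 = 0 → C = 0 ; F^2 = A^2 → F = A
      have hC2' : C^2 = 0 := by rw [hC2, hw10, h5]; ring
      have hC0 : C = 0 := pow_eq_zero_iff two_ne_zero |>.1 hC2'
      have hFA2 : F^2 = A^2 := by rw [hF2, hw10, h5]; ring
      have hFA : F = A := le_antisymm
        (le_of_sq_le_sq' _ _ hF hA (le_of_eq hFA2))
        (le_of_sq_le_sq' _ _ hA hF (le_of_eq hFA2.symm))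
      have hy1E : y1 ≤ E := le_of_sq_le_sq' _ _ hy1 hE (by nlinarith [sq_nonneg y2])
      rw [hC0, hFA]
      nlinarith [mul_le_mul_of_nonneg_left hy1E hA]
    · -- y1 = 0
      rcases mul_eq_zero.1 h3 with h6 | h6
      · -- y2 = 0 → E = 0
        have hE2' : E^2 = 0 := by rw [hE2, h5, h6]; ring
        have hE0 : E = 0 := pow_eq_zero_iff two_ne_zero |>.1 hE2'
        rw [hE0, h5]
        ring_nf
        exact le_refl 0
      · -- w1 = 0 → C ≤ F
        have hCF2 : C^2 ≤ F^2 := by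
          rw [hC2, hF2, h6]
          nlinarith [sq_nonneg A]
        have hCF : C ≤ F := le_of_sq_le_sq' _ _ hC hF hCF2
        have := mul_le_mul_of_nonneg_left hCF hE
        rw [h5]
        linarith

private lemma coords (A U V : ℝ) (hA : 0 < A) (hU : 0 ≤ U) (hV : 0 ≤ V)
    (t1 : V ≤ U + A) (t2 : U ≤ V + A) (t3 : A ≤ U + V) :
    ∃ u1 u2 : ℝ, 0 ≤ u2 ∧ U^2 = u1^2 + u2^2 ∧ V^2 = (u1 - A)^2 + u2^2 := by
  have hA0 : (2*A) ≠ 0 := by positivity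
  refine ⟨(U^2 + A^2 - V^2)/(2*A), Real.sqrt (U^2 - ((U^2 + A^2 - V^2)/(2*A))^2),
    Real.sqrt_nonneg _, ?_, ?_⟩
  · have hle : ((U^2 + A^2 - V^2)/(2*A))^2 ≤ U^2 := by
      rw [div_pow, div_le_iff₀ (by positivity)]
      nlinarith [mul_nonneg (mul_nonneg (by linarith : (0:ℝ) ≤ U + A - V)
          (by linarith : (0:ℝ) ≤ U + A + V))
        (mul_nonneg (by linarith : (0:ℝ) ≤ V - U + A) (by linarith : (0:ℝ) ≤ V + U - A))]
    rw [Real.sq_sqrt (by linarith)]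
    ring
  · have hle : ((U^2 + A^2 - V^2)/(2*A))^2 ≤ U^2 := by
      rw [div_pow, div_le_iff₀ (by positivity)]
      nlinarith [mul_nonneg (mul_nonneg (by linarith : (0:ℝ) ≤ U + A - V)
          (by linarith : (0:ℝ) ≤ U + A + V))
        (mul_nonneg (by linarith : (0:ℝ) ≤ V - U + A) (by linarith : (0:ℝ) ≤ V + U - A))]
    rw [Real.sq_sqrt (by linarith)]
    have h2A : 2*A*((U^2 + A^2 - V^2)/(2*A)) = U^2 + A^2 - V^2 := by field_simp
    nlinarith [h2A]

private lemma key_real (A B C D E F : ℝ)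
    (hA : 0 < A) (hB : 0 ≤ B) (hC : 0 ≤ C) (hD : 0 ≤ D) (hE : 0 ≤ E) (hF : 0 ≤ F)
    (tDEA : D ≤ E + A) (tEDA : E ≤ D + A) (tADE : A ≤ D + E)
    (tCFA : C ≤ F + A) (tFCA : F ≤ C + A) (tACF : A ≤ C + F)
    (tBEC : B ≤ E + C) (tBDF : B ≤ D + F)
    (hcomp : ∀ t : ℝ, 0 ≤ t → t ≤ 1 → ∃ g1 g2 : ℝ, 0 ≤ g1 ∧ 0 ≤ g2 ∧ B ≤ g1 + g2 ∧
      g1^2 ≤ (1-t)*E^2 + t*D^2 - t*(1-t)*A^2 ∧ g2^2 ≤ (1-t)*C^2 + t*F^2 - t*(1-t)*A^2) :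
    A^2 + B^2 ≤ C^2 + D^2 + 2*E*F := by
  obtain ⟨y1, y2, hy2, hE2, hD2⟩ := coords A E D hA hE hD (by linarith) (by linarith) (by linarith)
  obtain ⟨w1, w2', hw2', hC2', hF2'⟩ := coords A C F hA hC hF (by linarith) (by linarith) (by linarith)
  -- use w2 := -w2' ≤ 0
  set w2 : ℝ := -w2' with hw2def
  have hw2 : w2 ≤ 0 := by simp [hw2def]; exact hw2'
  have hC2 : C^2 = w1^2 + w2^2 := by rw [hw2def]; rw [hC2']; ring
  have hF2 : F^2 = (w1 - A)^2 + w2^2 := by rw [hw2def]; rw [hF2']; ring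
  clear hC2' hF2' hw2' hw2def
  by_cases hdeg : y2 - w2 = 0
  · -- degenerate collinear case
    have hy20 : y2 = 0 := by linarith
    have hw20 : w2 = 0 := by linarith
    by_cases hb : y1 < 0 ∧ w1 < 0
    · have hEy1 : E = -y1 := sq_eq_of_eq_sq _ _ hE (by linarith [hb.1])
        (by rw [hE2, hy20]; ring)
      have hFw1 : F = A - w1 := sq_eq_of_eq_sq _ _ hF (by linarith [hb.2])
        (by rw [hF2, hw20]; ring)
      have hCw1 : C = -w1 := sq_eq_of_eq_sq _ _ hC (by linarith [hb.2])
        (by rw [hC2, hw20]; ring)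
      have hEC : E*C + A*y1 ≤ E*F := by
        rw [hEy1, hCw1, hFw1]
        nlinarith [mul_nonpos_of_nonneg_of_nonpos hA.le (le_of_lt hb.1)]
      have := final_ii A y1 E C D F B hB hE hC tBEC hEC (by linear_combination hD2 - hE2)
      linarith
    · by_cases hc : A < y1 ∧ A < w1
      · have hEy1 : E = y1 := sq_eq_of_eq_sq _ _ hE (by linarith [hc.1])
          (by rw [hE2, hy20]; ring)
        have hCw1 : C = w1 := sq_eq_of_eq_sq _ _ hC (by linarith [hc.2])
          (by rw [hC2, hw20]; ring)
        have hDy1 : D = y1 - A := sq_eq_of_eq_sq _ _ hD (by linarith [hc.1])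
          (by linear_combination hD2 + y2*hy20)
        have hFw1 : F = w1 - A := sq_eq_of_eq_sq _ _ hF (by linarith [hc.2])
          (by rw [hF2, hw20]; ring)
        have hEC : F*D + A*(A - w1) ≤ F*E := by
          rw [hFw1, hDy1, hEy1]
          nlinarith [mul_le_mul_of_nonneg_left hc.2.le hA.le]
        have := final_ii A (A - w1) F D C E B hB hF hD (by linarith)
          hEC (by linear_combination hC2 - hF2)
        linarith
      · -- crossing exists in [0,A] on the axis
        have hmax : 0 ≤ max y1 w1 := by
          rcases le_or_gt 0 y1 with h | h
          · exact le_max_of_le_left h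
          · have h' : 0 ≤ w1 := by
              by_contra h''
              exact hb ⟨h, lt_of_not_ge h''⟩
            exact le_max_of_le_right h'
        have hminA : min y1 w1 ≤ A := by
          rcases not_and_or.mp hc with h' | h'
          · exact min_le_of_left_le (not_lt.1 h')
          · exact min_le_of_right_le (not_lt.1 h')
        obtain ⟨p, hpdef⟩ : ∃ p : ℝ, p = max 0 (min y1 w1) := ⟨_, rfl⟩
        have hp0 : 0 ≤ p := hpdef ▸ le_max_left _ _
        have hpA : p ≤ A := hpdef ▸ max_le hA.le hminA
        have hp1 : min y1 w1 ≤ p := hpdef ▸ le_max_right _ _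
        have hp2 : p ≤ max y1 w1 := hpdef ▸ max_le hmax min_le_max
        obtain ⟨t, ht0, ht1, hpt⟩ : ∃ t : ℝ, 0 ≤ t ∧ t ≤ 1 ∧ t*A = p :=
          ⟨p/A, div_nonneg hp0 hA.le, (div_le_one hA).2 hpA, by field_simp⟩
        obtain ⟨g1, g2, hg1, hg2, hBg, hq1, hq2⟩ := hcomp t ht0 ht1
        have e1 : (1-t)*E^2 + t*D^2 - t*(1-t)*A^2 = (y1 - p)^2 + y2^2 := by
          linear_combination (1-t)*hE2 + t*hD2 + (t*A + p - 2*y1)*hpt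
        have e2 : (1-t)*C^2 + t*F^2 - t*(1-t)*A^2 = (w1 - p)^2 + w2^2 := by
          linear_combination (1-t)*hC2 + t*hF2 + (t*A + p - 2*w1)*hpt
        have hg1' : g1 ≤ |y1 - p| := by
          apply le_of_sq_le_sq' _ _ hg1 (abs_nonneg _)
          rw [sq_abs]
          rw [e1, hy20] at hq1
          linarith [hq1]
        have hg2' : g2 ≤ |w1 - p| := by
          apply le_of_sq_le_sq' _ _ hg2 (abs_nonneg _)
          rw [sq_abs]
          rw [e2, hw20] at hq2
          linarith [hq2]
        have habs : |y1 - p| + |w1 - p| = |y1 - w1| := by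
          rcases le_total y1 w1 with h | h
          · rw [abs_of_nonpos (by have := min_eq_left h ▸ hp1; linarith),
              abs_of_nonneg (by have := max_eq_right h ▸ hp2; linarith),
              abs_of_nonpos (by linarith)]
            ring
          · rw [abs_of_nonneg (by have := max_eq_left h ▸ hp2; linarith),
              abs_of_nonpos (by have := min_eq_right h ▸ hp1; linarith),
              abs_of_nonneg (by linarith)]
            ring
        have hBr : B ≤ |y1 - w1| := by rw [← habs]; linarith
        have hB2 : B^2 ≤ (y1 - w1)^2 := by
          rw [← sq_abs (y1 - w1)]
          exact pow_le_pow_left₀ hB hBr 2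
        have hCS : y1*(A - w1) + y2*(-w2) ≤ E*F :=
          cs_aux E F y1 y2 (A - w1) (-w2) hE hF hE2 (by linear_combination hF2)
        linarith [hB2, hCS, hC2, hD2, sq_nonneg (y2 - w2)]
  · -- nondegenerate
    have hnd : 0 < y2 - w2 := lt_of_le_of_ne (by linarith) (Ne.symm hdeg)
    obtain ⟨s, hs0, hs1, hs2⟩ : ∃ s : ℝ, 0 ≤ s ∧ s ≤ 1 ∧ s*(y2 - w2) = y2 :=
      ⟨y2/(y2 - w2), div_nonneg hy2 hnd.le, (div_le_one hnd).2 (by linarith), by field_simp⟩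
    obtain ⟨p, hpdef⟩ : ∃ p : ℝ, p = (1-s)*y1 + s*w1 := ⟨_, rfl⟩
    have hkey : p * (y2 - w2) = y2*w1 - w2*y1 := by
      rw [hpdef]; linear_combination (w1 - y1) * hs2
    rcases le_or_gt p 0 with hp | hp
    · -- case ii
      have hcross : y2*w1 ≤ w2*y1 := by
        linarith [mul_nonneg (neg_nonneg.2 hp) hnd.le, hkey]
      have hEC := caseii_aux A y1 y2 w1 w2 E C F hA.le hE hC hF hy2 hw2 hE2 hC2 hF2 hcross hnd
      have := final_ii A y1 E C D F B hB hE hC tBEC hEC (by linear_combination hD2 - hE2)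
      linarith
    · rcases le_or_gt A p with hpA | hpA
      · -- case iii (swapped)
        have hcross' : (-w2)*(A - y1) ≤ (-y2)*(A - w1) := by
          linarith [mul_nonneg (by linarith : (0:ℝ) ≤ p - A) hnd.le, hkey]
        have hEC := caseii_aux A (A - w1) (-w2) (A - y1) (-y2) F D E hA.le hF hD hE
          (neg_nonneg.2 hw2) (neg_nonpos.2 hy2)
          (by linear_combination hF2) (by linear_combination hD2)
          (by linear_combination hE2) hcross' (by linarith)
        have := final_ii A (A - w1) F D C E B hB hF hD (by linarith)
          hEC (by linear_combination hC2 - hF2)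
        linarith
      · -- case i: crossing inside
        obtain ⟨t, ht0, ht1, hpt⟩ : ∃ t : ℝ, 0 ≤ t ∧ t ≤ 1 ∧ t*A = p :=
          ⟨p/A, div_nonneg hp.le hA.le, (div_le_one hA).2 hpA.le, by field_simp⟩
        obtain ⟨g1, g2, hg1, hg2, hBg, hq1, hq2⟩ := hcomp t ht0 ht1
        have e1 : (1-t)*E^2 + t*D^2 - t*(1-t)*A^2 = (y1 - p)^2 + y2^2 := by
          linear_combination (1-t)*hE2 + t*hD2 + (t*A + p - 2*y1)*hpt
        have e2 : (1-t)*C^2 + t*F^2 - t*(1-t)*A^2 = (w1 - p)^2 + w2^2 := by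
          linear_combination (1-t)*hC2 + t*hF2 + (t*A + p - 2*w1)*hpt
        obtain ⟨r, hr0, hr2⟩ : ∃ r : ℝ, 0 ≤ r ∧ r^2 = (y1 - w1)^2 + (y2 - w2)^2 :=
          ⟨Real.sqrt _, Real.sqrt_nonneg _, Real.sq_sqrt (by positivity)⟩
        have eg1 : (y1 - p)^2 + y2^2 = (s*r)^2 := by
          have h1 : y1 - p = s*(y1 - w1) := by rw [hpdef]; ring
          have h2 : y2 = s*(y2 - w2) := hs2.symm
          rw [h1]
          calc (s*(y1 - w1))^2 + y2^2 = (s*(y1 - w1))^2 + (s*(y2 - w2))^2 := by rw [← h2]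
            _ = s^2 * ((y1 - w1)^2 + (y2 - w2)^2) := by ring
            _ = (s*r)^2 := by rw [← hr2]; ring
        have eg2 : (w1 - p)^2 + w2^2 = ((1-s)*r)^2 := by
          have h1 : w1 - p = (1-s)*(w1 - y1) := by rw [hpdef]; ring
          have h2 : w2 = (1-s)*(w2 - y2) := by linear_combination -hs2
          rw [h1]
          calc ((1-s)*(w1 - y1))^2 + w2^2 = ((1-s)*(w1 - y1))^2 + ((1-s)*(w2 - y2))^2 := by
                rw [← h2]
            _ = (1-s)^2 * ((y1 - w1)^2 + (y2 - w2)^2) := by ring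
            _ = ((1-s)*r)^2 := by rw [← hr2]; ring
        have hg1' : g1 ≤ s*r := by
          apply le_of_sq_le_sq' _ _ hg1 (mul_nonneg hs0 hr0)
          rw [e1, eg1] at hq1; exact hq1
        have hg2' : g2 ≤ (1-s)*r := by
          apply le_of_sq_le_sq' _ _ hg2 (mul_nonneg (by linarith) hr0)
          rw [e2, eg2] at hq2; exact hq2
        have hBr : B ≤ r := by linarith [hg1', hg2', hBg]
        have hB2 : B^2 ≤ (y1 - w1)^2 + (y2 - w2)^2 := by
          rw [← hr2]; exact pow_le_pow_left₀ hB hBr 2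
        have hCS : y1*(A - w1) + y2*(-w2) ≤ E*F :=
          cs_aux E F y1 y2 (A - w1) (-w2) hE hF hE2 (by linear_combination hF2)
        linarith [hB2, hCS, hC2, hD2]

/-- In a Hadamard space, the quadrilateral (Reshetnyak-type) inequality
`d(x,v)² + d(y,w)² ≤ d(x,w)² + d(y,v)² + 2 d(x,y) d(v,w)` holds for all four points. -/
theorem hadamard_quadrilateral_inequality {X : Type*} [HadamardSpace X] (x y v w : X) :
    dist x v ^ 2 + dist y w ^ 2 ≤
      dist x w ^ 2 + dist y v ^ 2 + 2 * dist x y * dist v w := by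
  rcases eq_or_lt_of_le (dist_nonneg : (0:ℝ) ≤ dist x v) with h0 | hA
  · -- x = v
    have hxv : x = v := dist_eq_zero.1 h0.symm
    subst hxv
    have h1 : dist y w ≤ dist y x + dist x w := dist_triangle y x w
    have h2 : dist y x = dist x y := dist_comm y x
    simp only [dist_self]
    nlinarith [dist_nonneg (x := y) (y := w), dist_nonneg (x := x) (y := w),
      dist_nonneg (x := x) (y := y)]
  · refine key_real (dist x v) (dist y w) (dist x w) (dist y v) (dist x y) (dist v w) hA
      dist_nonneg dist_nonneg dist_nonneg dist_nonneg dist_nonneg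
      (by have h := dist_triangle y x v; rwa [dist_comm y x] at h)
      (by have h := dist_triangle x v y; rw [dist_comm v y] at h; linarith)
      (by have h := dist_triangle x y v; linarith)
      (by have h := dist_triangle x v w; linarith)
      (by have h := dist_triangle v x w; rw [dist_comm v x] at h; linarith)
      (by have h := dist_triangle x w v; rw [dist_comm w v] at h; linarith)
      (by have h := dist_triangle y x w; rwa [dist_comm y x] at h)
      (dist_triangle y v w)
      ?_
    intro t ht0 ht1
    refine ⟨dist y (HadamardSpace.geod x v t), dist (HadamardSpace.geod x v t) w,
      dist_nonneg, dist_nonneg, dist_triangle y _ w, ?_, ?_⟩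
    · have h := HadamardSpace.cat0 x v y t ⟨ht0, ht1⟩
      rwa [dist_comm y x] at h
    · have h := HadamardSpace.cat0 x v w t ⟨ht0, ht1⟩
      rw [dist_comm w x, dist_comm w v] at h
      rwa [dist_comm (HadamardSpace.geod x v t) w]
end

section
/- Let (H,d) be a locally compact Hadamard space and Ω ⊂ ℝ^n open and bounded. Then the set of Lipschitz continuous functions from Ω to H is dense in L^p(Ω, H) for every p ∈ [1,∞). -/
open Set

open MeasureTheory

section AuxLemmas
open ENNReal

/-- Intermediate point on a geodesic. -/
lemma HadamardSpace.exists_intermediate {X : Type*} [HadamardSpace X] (x z : X) {r : ℝ}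
    (hr : 0 ≤ r) (hrd : r ≤ dist x z) :
    ∃ w : X, dist x w = r ∧ dist w z = dist x z - r := by
  rcases eq_or_lt_of_le (dist_nonneg (x := x) (y := z)) with hd | hd
  · have h0 : r = 0 := le_antisymm (by rw [← hd] at hrd; exact hrd) hr
    exact ⟨x, by simp [h0], by simp [h0]⟩
  · set d := dist x z with hdd
    have hdne : d ≠ 0 := ne_of_gt hd
    set t := r / d with ht
    have ht0 : 0 ≤ t := div_nonneg hr hd.le
    have ht1 : t ≤ 1 := (div_le_one hd).mpr hrd
    have spec := HadamardSpace.geod_spec x z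
    refine ⟨HadamardSpace.geod x z t, ?_, ?_⟩
    · have := spec.dist_eq 0 (by simp) t ⟨ht0, ht1⟩
      rw [spec.src] at this
      rw [this, abs_of_nonpos (by linarith), neg_sub, sub_zero, ← hdd, ht,
        div_mul_cancel₀ _ hdne]
    · have := spec.dist_eq t ⟨ht0, ht1⟩ 1 (by simp)
      rw [spec.tgt] at this
      rw [this, abs_of_nonpos (by linarith), neg_sub, sub_mul, one_mul, ← hdd, ht,
        div_mul_cancel₀ _ hdne]

lemma HadamardSpace.properSpace (X : Type*) [HadamardSpace X] [LocallyCompactSpace X] :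
    ProperSpace X := by
  constructor
  intro x R
  -- bad radii
  by_contra hbad
  set B : Set ℝ := {r : ℝ | ¬ IsCompact (Metric.closedBall x r)} with hB
  have hRB : R ∈ B := hbad
  have hBdd : BddBelow B := by
    refine ⟨0, fun r hr => ?_⟩
    by_contra hr0
    push_neg at hr0
    exact hr (by simp [Metric.closedBall_eq_empty.mpr hr0])
  set ρ := sInf B with hρ
  have hρ0 : 0 ≤ ρ := by
    refine le_csInf ⟨R, hRB⟩ (fun r hr => ?_)
    by_contra hr0
    push_neg at hr0
    exact hr (by simp [Metric.closedBall_eq_empty.mpr hr0])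
  -- all radii < ρ are good
  have hgood : ∀ r < ρ, IsCompact (Metric.closedBall x r) := by
    intro r hr
    by_contra h
    exact absurd (csInf_le hBdd h) (not_le.mpr hr)
  -- closedBall x ρ is compact
  have hcomp : IsCompact (Metric.closedBall x ρ) := by
    rcases eq_or_lt_of_le hρ0 with h0 | hpos
    · rw [← h0, Metric.closedBall_zero]; exact isCompact_singleton
    · refine TotallyBounded.isCompact_of_isClosed ?_ Metric.isClosed_closedBall
      rw [Metric.totallyBounded_iff]
      intro ε hε
      set r' := max 0 (ρ - ε/2) with hr'
      have hr'ρ : r' < ρ := by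
        rcases le_or_gt ρ (ε/2) with h | h
        · simp [hr', max_lt_iff]; constructor <;> linarith
        · simp [hr', max_lt_iff]; constructor <;> linarith
      have hr'0 : 0 ≤ r' := le_max_left _ _
      obtain ⟨s, hsfin, hscov⟩ := Metric.totallyBounded_iff.mp
        (hgood r' hr'ρ).totallyBounded (ε/2) (by linarith)
      refine ⟨s, hsfin, fun z hz => ?_⟩
      rcases le_or_gt (dist x z) r' with hle | hgt
      · have : z ∈ ⋃ y ∈ s, Metric.ball y (ε/2) := hscov (Metric.mem_closedBall'.mp hle)
        simp only [mem_iUnion] at this ⊢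
        obtain ⟨y, hy, hzy⟩ := this
        exact ⟨y, hy, Metric.ball_subset_ball (by linarith) hzy⟩
      · obtain ⟨w, hw1, hw2⟩ := HadamardSpace.exists_intermediate x z hr'0 hgt.le
        have hwball : w ∈ Metric.closedBall x r' := by simpa [Metric.mem_closedBall, dist_comm] using hw1.le
        have : w ∈ ⋃ y ∈ s, Metric.ball y (ε/2) := hscov hwball
        simp only [mem_iUnion] at this ⊢
        obtain ⟨y, hy, hwy⟩ := this
        refine ⟨y, hy, ?_⟩
        have hxz : dist x z ≤ ρ := Metric.mem_closedBall'.mp hz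
        have hwz : dist w z = dist x z - r' := hw2
        have h1 : dist w z ≤ ε/2 := by
          rw [hwz]
          have : ρ - ε/2 ≤ r' := le_max_right _ _
          linarith
        have h2 : dist w y < ε/2 := hwy
        calc dist z y ≤ dist z w + dist w y := dist_triangle _ _ _
          _ < ε := by rw [dist_comm z w]; linarith
  -- extend compactness a bit beyond ρ
  have hext : ∃ δ > 0, IsCompact (Metric.closedBall x (ρ + δ)) := by
    -- cover the ball by compact balls
    have hloc : ∀ y : X, ∃ δy > (0:ℝ), IsCompact (Metric.closedBall y δy) := by
      intro y
      obtain ⟨K, hKmem, hKcomp⟩ := (compact_basis_nhds y).ex_mem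
      obtain ⟨δy, hδy, hball⟩ := Metric.mem_nhds_iff.mp hKmem
      exact ⟨δy/2, by linarith,
        hKcomp.of_isClosed_subset Metric.isClosed_closedBall
          ((Metric.closedBall_subset_ball (by linarith)).trans hball)⟩
    choose δy hδy hKy using hloc
    obtain ⟨s, hscov⟩ := hcomp.elim_finite_subcover (fun y => Metric.ball y (δy y / 2))
      (fun y => Metric.isOpen_ball)
      (fun z hz => mem_iUnion.mpr ⟨z, Metric.mem_ball_self (by linarith [hδy z])⟩)
    rcases s.eq_empty_or_nonempty with hse | hsne
    · -- ball is empty?? then ρ < 0 impossible since ρ ≥ 0 and x ∈ ball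
      exfalso
      have : x ∈ Metric.closedBall x ρ := Metric.mem_closedBall_self hρ0
      have := hscov this
      simp [hse] at this
    · set δ := (s.inf' hsne (fun y => δy y / 2)) with hδ
      have hδpos : 0 < δ := by
        rw [hδ, Finset.lt_inf'_iff]
        exact fun y _ => by linarith [hδy y]
      refine ⟨δ, hδpos, ?_⟩
      have hsub : Metric.closedBall x (ρ + δ) ⊆
          Metric.closedBall x ρ ∪ ⋃ y ∈ s, Metric.closedBall y (δy y) := by
        intro z hz
        rcases le_or_gt (dist x z) ρ with hle | hgt
        · exact Or.inl (Metric.mem_closedBall'.mp hle)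
        · right
          obtain ⟨w, hw1, hw2⟩ := HadamardSpace.exists_intermediate x z hρ0 hgt.le
          have hwball : w ∈ Metric.closedBall x ρ := by
            simpa [Metric.mem_closedBall, dist_comm] using hw1.le
          have := hscov hwball
          simp only [mem_iUnion] at this ⊢
          obtain ⟨y, hy, hwy⟩ := this
          refine ⟨y, hy, ?_⟩
          have hxz : dist x z ≤ ρ + δ := Metric.mem_closedBall'.mp hz
          have hδy' : δ ≤ δy y / 2 := Finset.inf'_le _ hy
          have h1 : dist w z ≤ δ := by rw [hw2]; linarith
          have h2 : dist y w < δy y / 2 := by rw [dist_comm]; exact hwy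
          calc dist z y ≤ dist z w + dist w y := dist_triangle _ _ _
            _ ≤ δy y := by rw [dist_comm z w, dist_comm w y]; linarith [hδy y]
      have hcompU : IsCompact (Metric.closedBall x ρ ∪ ⋃ y ∈ s, Metric.closedBall y (δy y)) :=
        hcomp.union (s.isCompact_biUnion (fun y _ => hKy y))
      exact hcompU.of_isClosed_subset Metric.isClosed_closedBall hsub
  obtain ⟨δ, hδ, hcompext⟩ := hext
  obtain ⟨b, hbB, hbρ⟩ := Real.lt_sInf_add_pos ⟨R, hRB⟩ hδ
  rw [← hρ] at hbρ
  exact hbB (hcompext.of_isClosed_subset Metric.isClosed_closedBall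
    (Metric.closedBall_subset_closedBall (by linarith)))

section
variable {α H : Type*} [MeasurableSpace α] [MetricSpace H] [CompleteSpace H]
  [SecondCountableTopology H] [MeasurableSpace H] [BorelSpace H]

lemma approx_by_simple (μ : Measure α) {p : ℝ} (hp : 1 ≤ p)
    (f : α → H) (hf : Measurable f) (a : H)
    (hfp : (∫⁻ x, ENNReal.ofReal (dist (f x) a ^ p) ∂μ) ≠ ⊤) {η : ℝ≥0∞} (hη : η ≠ 0) :
    ∃ s : SimpleFunc α H, (∫⁻ x, ENNReal.ofReal (dist (f x) (s x) ^ p) ∂μ) < η := by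
  have hp0 : 0 < p := lt_of_lt_of_le one_pos hp
  set g : ℕ → SimpleFunc α H := fun N => SimpleFunc.approxOn f hf univ a (mem_univ a) N with hg
  set F : ℕ → α → ℝ≥0∞ := fun N x => ENNReal.ofReal (dist (f x) (g N x) ^ p) with hF
  have hFmeas : ∀ N, Measurable (F N) := by
    intro N
    exact ENNReal.measurable_ofReal.comp ((Real.continuous_rpow_const (le_of_lt (lt_of_lt_of_le one_pos hp))).measurable.comp (hf.dist (g N).measurable))
  have hdistle : ∀ N x, dist (f x) (g N x) ≤ dist (f x) a := by
    intro N x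
    have := SimpleFunc.edist_approxOn_le hf (mem_univ a) x N
    rw [edist_dist, edist_dist] at this
    rw [dist_comm (f x) (g N x), dist_comm (f x) a]
    exact (ENNReal.ofReal_le_ofReal_iff dist_nonneg).mp this
  have hbound : ∀ N, ∀ᵐ x ∂μ, F N x ≤ ENNReal.ofReal (dist (f x) a ^ p) := by
    intro N
    filter_upwards with x
    exact ENNReal.ofReal_le_ofReal
      (Real.rpow_le_rpow dist_nonneg (hdistle N x) hp0.le)
  have hlim : ∀ᵐ x ∂μ, Filter.Tendsto (fun N => F N x) Filter.atTop (nhds 0) := by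
    filter_upwards with x
    have h1 : Filter.Tendsto (fun N => g N x) Filter.atTop (nhds (f x)) :=
      SimpleFunc.tendsto_approxOn hf (mem_univ a) (x := x) (by simp)
    have h2 : Filter.Tendsto (fun N => dist (f x) (g N x)) Filter.atTop (nhds 0) := by
      simpa using (tendsto_const_nhds.dist h1 : Filter.Tendsto
        (fun N => dist (f x) (g N x)) Filter.atTop (nhds (dist (f x) (f x))))
    have h3 : Filter.Tendsto (fun N => dist (f x) (g N x) ^ p) Filter.atTop (nhds 0) := by
      have := h2.rpow_const (p := p) (Or.inr hp0.le)
      simpa [Real.zero_rpow hp0.ne'] using this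
    have h4 := (ENNReal.continuous_ofReal.tendsto 0).comp h3
    rw [ENNReal.ofReal_zero] at h4
    exact h4
  have := tendsto_lintegral_of_dominated_convergence _ hFmeas hbound hfp hlim
  simp only [lintegral_zero] at this
  rw [ENNReal.tendsto_atTop_zero] at this
  obtain ⟨η', hη'0, hη'η⟩ := exists_between (pos_iff_ne_zero.mpr hη)
  obtain ⟨N, hN⟩ := this η' hη'0
  exact ⟨g N, lt_of_le_of_lt (hN N le_rfl) hη'η⟩
end

lemma lipschitz_glue {α : Type*} [MetricSpace α] {H : Type*} [HadamardSpace H]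
    (a : H) {ι : Type*} (t : Finset ι) (v : ι → H) (K : ι → Set α) {δ : ℝ} (hδ : 0 < δ)
    (hne : ∀ i ∈ t, (K i).Nonempty)
    (hdisj : ∀ i ∈ t, ∀ j ∈ t, i ≠ j →
      Disjoint (Metric.thickening δ (K i)) (Metric.thickening δ (K j))) :
    ∃ (C : NNReal) (g : α → H), LipschitzWith C g ∧
      (∀ i ∈ t, ∀ x ∈ K i, g x = v i) ∧
      (∀ x, dist a (g x) ≤ t.sup (fun i => nndist a (v i))) := by
  classical
  set R : ℝ := ((t.sup (fun i => nndist a (v i)) : NNReal) : ℝ) with hR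
  have hR0 : 0 ≤ R := NNReal.coe_nonneg _
  have hRv : ∀ i ∈ t, dist a (v i) ≤ R := by
    intro i hi
    have : nndist a (v i) ≤ t.sup (fun i => nndist a (v i)) := Finset.le_sup (f := fun i => nndist a (v i)) hi
    exact_mod_cast this
  -- bump functions
  set φ : ι → α → ℝ := fun i x => max 0 (1 - Metric.infDist x (K i) / δ) with hφ
  have hφ0 : ∀ i x, 0 ≤ φ i x := fun i x => le_max_left _ _
  have hφ1 : ∀ i x, φ i x ≤ 1 := by
    intro i x
    have h1 : 0 ≤ Metric.infDist x (K i) / δ := div_nonneg Metric.infDist_nonneg hδ.le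
    simp only [hφ, max_le_iff]
    constructor <;> linarith
  have hφmem : ∀ i x, x ∈ K i → φ i x = 1 := by
    intro i x hx
    simp [hφ, Metric.infDist_zero_of_mem hx]
  have hφout : ∀ i ∈ t, ∀ x, x ∉ Metric.thickening δ (K i) → φ i x = 0 := by
    intro i hi x hx
    rw [Metric.mem_thickening_iff_infDist_lt (hne i hi)] at hx
    push_neg at hx
    have h2 : (1:ℝ) ≤ Metric.infDist x (K i) / δ := (le_div_iff₀ hδ).mpr (by linarith)
    simp only [hφ]
    rw [max_eq_left (by linarith)]
  have hφlip : ∀ i x y, φ i x - φ i y ≤ dist x y / δ := by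
    intro i x y
    have hc : 0 ≤ dist x y / δ := div_nonneg dist_nonneg hδ.le
    have h1 : Metric.infDist y (K i) ≤ Metric.infDist x (K i) + dist x y := by
      have := Metric.infDist_le_infDist_add_dist (x := y) (y := x) (s := K i)
      rwa [dist_comm y x] at this
    have hdiv : Metric.infDist y (K i) / δ ≤
        Metric.infDist x (K i) / δ + dist x y / δ := by
      rw [← add_div]
      gcongr
    have key : 1 - Metric.infDist x (K i) / δ ≤
        (1 - Metric.infDist y (K i) / δ) + dist x y / δ := by linarith
    have h3 : φ i x ≤ max 0 ((1 - Metric.infDist y (K i) / δ) + dist x y / δ) :=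
      max_le_max le_rfl key
    have h4 : max 0 ((1 - Metric.infDist y (K i) / δ) + dist x y / δ) ≤
        φ i y + dist x y / δ := by
      apply max_le
      · exact add_nonneg (hφ0 i y) hc
      · exact add_le_add (le_max_right _ _) le_rfl
    linarith
  -- geodesic facts
  have gd : ∀ (y : H), ∀ u ∈ Icc (0:ℝ) 1, ∀ w ∈ Icc (0:ℝ) 1,
      dist (HadamardSpace.geod a y u) (HadamardSpace.geod a y w) = |u - w| * dist a y :=
    fun y u hu w hw => (HadamardSpace.geod_spec a y).dist_eq u hu w hw
  have gda : ∀ (y : H), ∀ u ∈ Icc (0:ℝ) 1, dist a (HadamardSpace.geod a y u) = u * dist a y := by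
    intro y u hu
    have h := gd y 0 (by simp) u hu
    rw [(HadamardSpace.geod_spec a y).src] at h
    rw [h, abs_of_nonpos (by linarith [hu.1]), neg_sub, sub_zero]
  -- the glued map
  set g : α → H := fun x =>
    if h : ∃ i, i ∈ t ∧ x ∈ Metric.thickening δ (K i) then
      HadamardSpace.geod a (v h.choose) (φ h.choose x) else a with hg
  have huniq : ∀ {x i j}, i ∈ t → j ∈ t → x ∈ Metric.thickening δ (K i) →
      x ∈ Metric.thickening δ (K j) → i = j := by
    intro x i j hi hj hxi hxj
    by_contra hij
    exact Set.disjoint_left.mp (hdisj i hi j hj hij) hxi hxj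
  have hgval : ∀ x i, i ∈ t → x ∈ Metric.thickening δ (K i) →
      g x = HadamardSpace.geod a (v i) (φ i x) := by
    intro x i hi hx
    have h : ∃ i, i ∈ t ∧ x ∈ Metric.thickening δ (K i) := ⟨i, hi, hx⟩
    simp only [hg]
    rw [dif_pos h]
    obtain ⟨hct, hcx⟩ := h.choose_spec
    rw [show h.choose = i from huniq hct hi hcx hx]
  have hgnot : ∀ x, ¬ (∃ i, i ∈ t ∧ x ∈ Metric.thickening δ (K i)) → g x = a := by
    intro x hx
    simp only [hg]
    rw [dif_neg hx]
  -- one-sided estimate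
  have honeside : ∀ x y i, i ∈ t → x ∈ Metric.thickening δ (K i) → φ i y = 0 →
      dist a (g x) ≤ (R / δ) * dist x y := by
    intro x y i hi hx hzero
    rw [hgval x i hi hx, gda (v i) _ ⟨hφ0 i x, hφ1 i x⟩]
    have h1 : φ i x ≤ dist x y / δ := by
      have := hφlip i x y
      linarith
    calc φ i x * dist a (v i) ≤ (dist x y / δ) * R :=
          mul_le_mul h1 (hRv i hi) dist_nonneg (div_nonneg dist_nonneg hδ.le)
      _ = (R / δ) * dist x y := by ring
  have hbound : ∀ x, dist a (g x) ≤ R := by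
    intro x
    by_cases h : ∃ i, i ∈ t ∧ x ∈ Metric.thickening δ (K i)
    · obtain ⟨i, hi, hxi⟩ := h
      rw [hgval x i hi hxi, gda (v i) _ ⟨hφ0 i x, hφ1 i x⟩]
      calc φ i x * dist a (v i) ≤ 1 * R :=
            mul_le_mul (hφ1 i x) (hRv i hi) dist_nonneg zero_le_one
        _ = R := one_mul R
    · rw [hgnot x h]; simpa using hR0
  -- Lipschitz estimate
  have hlips : ∀ x y, dist (g x) (g y) ≤ (2 * R / δ) * dist x y := by
    have haux : ∀ x y : α, (R / δ) * dist x y ≤ (2 * R / δ) * dist x y := by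
      intro x y
      have hnn : 0 ≤ (R / δ) * dist x y :=
        mul_nonneg (div_nonneg hR0 hδ.le) dist_nonneg
      have hring : (2 * R / δ) * dist x y - (R / δ) * dist x y = (R / δ) * dist x y := by
        ring
      linarith
    intro x y
    by_cases hx : ∃ i, i ∈ t ∧ x ∈ Metric.thickening δ (K i) <;>
      by_cases hy : ∃ i, i ∈ t ∧ y ∈ Metric.thickening δ (K i)
    · obtain ⟨i, hi, hxi⟩ := hx
      obtain ⟨j, hj, hyj⟩ := hy
      by_cases hij : i = j
      · subst hij
        rw [hgval x i hi hxi, hgval y i hi hyj,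
          gd (v i) _ ⟨hφ0 i x, hφ1 i x⟩ _ ⟨hφ0 i y, hφ1 i y⟩]
        have habs : |φ i x - φ i y| ≤ dist x y / δ := by
          rw [abs_sub_le_iff]
          refine ⟨hφlip i x y, ?_⟩
          have := hφlip i y x
          rwa [dist_comm y x] at this
        calc |φ i x - φ i y| * dist a (v i) ≤ (dist x y / δ) * R :=
              mul_le_mul habs (hRv i hi) dist_nonneg (div_nonneg dist_nonneg hδ.le)
          _ = (R / δ) * dist x y := by ring
          _ ≤ (2 * R / δ) * dist x y := haux x y
      · have hφjx : φ j x = 0 := hφout j hj x (fun hmem => hij (huniq hi hj hxi hmem))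
        have hφiy : φ i y = 0 := hφout i hi y (fun hmem => hij (huniq hi hj hmem hyj))
        calc dist (g x) (g y) ≤ dist (g x) a + dist a (g y) := dist_triangle _ _ _
          _ ≤ (R / δ) * dist x y + (R / δ) * dist y x := by
              refine add_le_add ?_ ?_
              · rw [dist_comm]; exact honeside x y i hi hxi hφiy
              · exact honeside y x j hj hyj hφjx
          _ = (2 * R / δ) * dist x y := by rw [dist_comm y x]; ring
    · -- g y = a
      have hφiy : ∀ i ∈ t, φ i y = 0 := fun i hi =>
        hφout i hi y (fun hmem => hy ⟨i, hi, hmem⟩)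
      obtain ⟨i, hi, hxi⟩ := hx
      rw [hgnot y hy]
      calc dist (g x) a = dist a (g x) := dist_comm _ _
        _ ≤ (R / δ) * dist x y := honeside x y i hi hxi (hφiy i hi)
        _ ≤ (2 * R / δ) * dist x y := haux x y
    · have hφix : ∀ i ∈ t, φ i x = 0 := fun i hi =>
        hφout i hi x (fun hmem => hx ⟨i, hi, hmem⟩)
      obtain ⟨j, hj, hyj⟩ := hy
      rw [hgnot x hx]
      calc dist a (g y) ≤ (R / δ) * dist y x := honeside y x j hj hyj (hφix j hj)
        _ = (R / δ) * dist x y := by rw [dist_comm y x]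
        _ ≤ (2 * R / δ) * dist x y := haux x y
    · rw [hgnot x hx, hgnot y hy]
      simp only [dist_self]
      positivity
  refine ⟨Real.toNNReal (2 * R / δ), g, ?_, ?_, ?_⟩
  · apply LipschitzWith.of_dist_le_mul
    intro x y
    rw [Real.coe_toNNReal _ (by positivity)]
    exact hlips x y
  · intro i hi x hx
    rw [hgval x i hi (Metric.self_subset_thickening hδ (K i) hx), hφmem i x hx,
      (HadamardSpace.geod_spec a (v i)).tgt]
  · intro x
    exact hbound x

lemma rpow_add_le_aux {u v q : ℝ} (hu : 0 ≤ u) (hv : 0 ≤ v) (hq : 0 ≤ q) :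
    (u + v) ^ q ≤ 2 ^ q * (u ^ q + v ^ q) := by
  have h2 : (0:ℝ) ≤ 2 ^ q := Real.rpow_nonneg (by norm_num) q
  rcases le_total u v with h | h
  · calc (u + v) ^ q ≤ (2 * v) ^ q :=
        Real.rpow_le_rpow (by linarith) (by linarith) hq
      _ = 2 ^ q * v ^ q := Real.mul_rpow (by norm_num) hv
      _ ≤ 2 ^ q * (u ^ q + v ^ q) := by
        have := Real.rpow_nonneg hu q
        nlinarith
  · calc (u + v) ^ q ≤ (2 * u) ^ q :=
        Real.rpow_le_rpow (by linarith) (by linarith) hq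
      _ = 2 ^ q * u ^ q := Real.mul_rpow (by norm_num) hu
      _ ≤ 2 ^ q * (u ^ q + v ^ q) := by
        have := Real.rpow_nonneg hv q
        nlinarith


/-- Density of Lipschitz functions in `L^p(Ω, H)` for a locally compact Hadamard space `H`,
`Ω ⊂ ℝⁿ` open and bounded, and `p ∈ [1, ∞)`: every measurable `f : Ω → H` with finite
`p`-th moment can be approximated in the `L^p` distance by Lipschitz continuous maps. -/
theorem lipschitz_dense_in_Lp {n : ℕ} {H : Type*} [HadamardSpace H]
    [LocallyCompactSpace H] [MeasurableSpace H] [BorelSpace H]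
    (Ω : Set (Fin n → ℝ)) (hΩo : IsOpen Ω) (hΩb : Bornology.IsBounded Ω)
    (p : ℝ) (hp : 1 ≤ p)
    (f : (Fin n → ℝ) → H) (hf : Measurable f) (a : H)
    (hfp : (∫⁻ x in Ω, ENNReal.ofReal (dist (f x) a ^ p)) < ⊤) :
    ∀ ε > (0:ℝ), ∃ (K : NNReal) (g : (Fin n → ℝ) → H), LipschitzWith K g ∧
      (∫⁻ x in Ω, ENNReal.ofReal (dist (f x) (g x) ^ p)) < ENNReal.ofReal (ε ^ p) := by
  intro ε hε
  classical
  haveI : ProperSpace H := HadamardSpace.properSpace H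
  have hp0 : 0 < p := lt_of_lt_of_le one_pos hp
  set E : ℝ≥0∞ := ENNReal.ofReal (ε ^ p) with hE
  have hE0 : E ≠ 0 := by
    simp only [hE, ne_eq, ENNReal.ofReal_eq_zero, not_le]
    exact Real.rpow_pos_of_pos hε p
  have hEtop : E ≠ ⊤ := ENNReal.ofReal_ne_top
  set C2 : ℝ≥0∞ := ENNReal.ofReal (2 ^ p) with hC2
  have hC2top : C2 ≠ ⊤ := ENNReal.ofReal_ne_top
  have hC20 : C2 ≠ 0 := by
    simp only [hC2, ne_eq, ENNReal.ofReal_eq_zero, not_le]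
    exact Real.rpow_pos_of_pos two_pos p
  -- Step 1: approximate by a simple function
  have hfp' : (∫⁻ x, ENNReal.ofReal (dist (f x) a ^ p) ∂(volume.restrict Ω)) ≠ ⊤ := hfp.ne
  have hE2 : (E / 2 : ℝ≥0∞) ≠ 0 := by simp [hE0]
  obtain ⟨s, hs⟩ := approx_by_simple (volume.restrict Ω) hp f hf a hfp' hE2
  -- Constants
  set F : (Fin n → ℝ) → ℝ≥0∞ := fun x => ENNReal.ofReal (dist (f x) a ^ p) with hF
  have hFmeas : Measurable F :=
    ENNReal.measurable_ofReal.comp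
      ((Real.continuous_rpow_const hp0.le).measurable.comp (hf.dist measurable_const))
  set R : NNReal := s.range.sup (fun y => nndist a y) with hRdef
  set X : ℝ≥0∞ := E / 2 / 2 / C2 with hX
  have hXtop : X ≠ ⊤ := by
    refine (ENNReal.div_lt_top (ENNReal.div_lt_top (ENNReal.div_lt_top hEtop (by norm_num)).ne
      (by norm_num)).ne hC20).ne
  have hX0 : X ≠ 0 := by
    simp only [hX, ne_eq, ENNReal.div_eq_zero_iff, not_or]
    exact ⟨⟨⟨hE0, by norm_num⟩, by norm_num⟩, hC2top⟩
  set η₄ : ℝ≥0∞ := X / (ENNReal.ofReal ((R:ℝ) ^ p) + 1) with hη₄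
  have hη₄0 : η₄ ≠ 0 := by
    simp only [hη₄, ne_eq, ENNReal.div_eq_zero_iff, not_or]
    refine ⟨hX0, by simp [ENNReal.add_eq_top]⟩
  have hη₄top : η₄ ≠ ⊤ :=
    (ENNReal.div_lt_top hXtop (by simp)).ne
  -- Step 2: absolute continuity
  obtain ⟨δ₀, hδ₀pos, hδabs⟩ :=
    exists_pos_setLIntegral_lt_of_measure_lt (μ := volume.restrict Ω) hfp' hX0
  set θ : ℝ≥0∞ := min δ₀ η₄ with hθ
  have hθ0 : θ ≠ 0 := by
    rw [hθ]
    intro h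
    rcases min_eq_iff.mp h with ⟨h1, -⟩ | ⟨h1, -⟩
    · exact absurd h1.symm (ne_of_lt hδ₀pos)
    · exact hη₄0 h1
  have hθtop : θ ≠ ⊤ := ne_top_of_le_ne_top hη₄top (min_le_right _ _)
  -- Step 3: inner regular compact approximations of the fibers
  set A : H → Set (Fin n → ℝ) := fun y => Ω ∩ s ⁻¹' {y} with hA
  have hAmeas : ∀ y, MeasurableSet (A y) :=
    fun y => hΩo.measurableSet.inter (s.measurableSet_fiber y)
  have hAfin : ∀ y, volume (A y) ≠ ⊤ :=
    fun y => (lt_of_le_of_lt (measure_mono inter_subset_left) hΩb.measure_lt_top).ne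
  set m : ℕ := s.range.card with hm
  have hθm0 : (θ / (m + 1) : ℝ≥0∞) ≠ 0 := by
    simp only [ne_eq, ENNReal.div_eq_zero_iff, not_or]
    exact ⟨hθ0, by simp [ENNReal.add_eq_top]⟩
  have hcomp : ∀ y ∈ s.range, ∃ k,
      k ⊆ A y ∧ IsCompact k ∧ volume (A y \ k) < θ / (m + 1) :=
    fun y _ => (hAmeas y).exists_isCompact_diff_lt (hAfin y) hθm0
  choose! K hK1 hK2 hK3 using hcomp
  set t : Finset H := s.range.filter (fun y => (K y).Nonempty) with ht
  have htsub : t ⊆ s.range := Finset.filter_subset _ _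
  -- disjointness of fibers and thickenings
  have hAdisj : ∀ y z : H, y ≠ z → Disjoint (A y) (A z) := by
    intro y z hyz
    refine Set.disjoint_left.mpr fun x hx hx' => hyz ?_
    rw [← hx.2, ← hx'.2]
  have hpair : ∀ y z : H, y ∈ t → z ∈ t → y ≠ z → ∃ d : ℝ, 0 < d ∧
      Disjoint (Metric.thickening d (K y)) (Metric.thickening d (K z)) := by
    intro y z hy hz hyz
    have hdKyz : Disjoint (K y) (K z) :=
      (hAdisj y z hyz).mono (hK1 y (htsub hy)) (hK1 z (htsub hz))
    obtain ⟨d, hd1, hd2⟩ := hdKyz.exists_thickenings (hK2 y (htsub hy)) (hK2 z (htsub hz)).isClosed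
    exact ⟨d, hd1, hd2⟩
  choose! d hd1 hd2 using hpair
  set pairs : Finset (H × H) := (t ×ˢ t).filter (fun q => q.1 ≠ q.2) with hpairs
  set Dset : Finset ℝ := insert (1:ℝ) (pairs.image (fun q => d q.1 q.2)) with hDset
  have hDne : Dset.Nonempty := ⟨1, Finset.mem_insert_self _ _⟩
  set δ : ℝ := Dset.min' hDne with hδdef
  have hδpos : 0 < δ := by
    rw [hδdef, Finset.lt_min'_iff]
    intro b hb
    rcases Finset.mem_insert.mp hb with hb | hb
    · rw [hb]; norm_num
    · obtain ⟨q, hq, rfl⟩ := Finset.mem_image.mp hb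
      rw [hpairs, Finset.mem_filter, Finset.mem_product] at hq
      exact hd1 q.1 q.2 hq.1.1 hq.1.2 hq.2
  have hδle : ∀ y z : H, y ∈ t → z ∈ t → y ≠ z → δ ≤ d y z := by
    intro y z hy hz hyz
    refine Finset.min'_le _ _ (Finset.mem_insert_of_mem (Finset.mem_image.mpr ⟨(y, z), ?_, rfl⟩))
    rw [hpairs, Finset.mem_filter, Finset.mem_product]
    exact ⟨⟨hy, hz⟩, hyz⟩
  have hdisjth : ∀ y ∈ t, ∀ z ∈ t, y ≠ z →
      Disjoint (Metric.thickening δ (K y)) (Metric.thickening δ (K z)) := by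
    intro y hy z hz hyz
    exact (hd2 y z hy hz hyz).mono (Metric.thickening_mono (hδle y z hy hz hyz) _)
      (Metric.thickening_mono (hδle y z hy hz hyz) _)
  -- Step 4: the glued Lipschitz map
  obtain ⟨C, g, hglip, hgK, hgbd⟩ := lipschitz_glue a t id K hδpos
    (fun y hy => (Finset.mem_filter.mp hy).2) hdisjth
  have hgR : ∀ x, dist a (g x) ≤ (R : ℝ) := by
    intro x
    refine le_trans (hgbd x) ?_
    have : t.sup (fun y => nndist a (id y)) ≤ s.range.sup (fun y => nndist a y) :=
      Finset.sup_mono htsub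
    exact_mod_cast this
  refine ⟨C, g, hglip, ?_⟩
  -- the good set
  set G : Set (Fin n → ℝ) := ⋃ y ∈ t, K y with hG
  have hGmeas : MeasurableSet G := by
    refine MeasurableSet.biUnion t.countable_toSet fun y hy => ?_
    exact (hK2 y (htsub hy)).measurableSet
  have hgs : ∀ x ∈ G, g x = s x := by
    intro x hx
    rw [hG, mem_iUnion₂] at hx
    obtain ⟨y, hy, hxy⟩ := hx
    have h1 : g x = y := hgK y hy x hxy
    have h2 : s x = y := (hK1 y (htsub hy) hxy).2
    rw [h1, h2]
  -- measure of the bad set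
  have hcover : Ω \ G ⊆ ⋃ y ∈ s.range, (A y \ K y) := by
    intro x hx
    have hxr : s x ∈ s.range := SimpleFunc.mem_range_self s x
    refine mem_iUnion₂.mpr ⟨s x, hxr, ⟨⟨hx.1, rfl⟩, fun hxK => ?_⟩⟩
    refine hx.2 (mem_iUnion₂.mpr ⟨s x, ?_, hxK⟩)
    exact Finset.mem_filter.mpr ⟨hxr, ⟨x, hxK⟩⟩
  have hmeasG : volume (Ω \ G) < θ := by
    calc volume (Ω \ G) ≤ ∑ y ∈ s.range, volume (A y \ K y) :=
          le_trans (measure_mono hcover) (measure_biUnion_finset_le _ _)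
      _ ≤ ∑ _y ∈ s.range, θ / (m + 1) :=
          Finset.sum_le_sum (fun y hy => (hK3 y hy).le)
      _ = (m : ℝ≥0∞) * (θ / (m + 1)) := by
          rw [Finset.sum_const, hm, nsmul_eq_mul]
      _ < ((m : ℝ≥0∞) + 1) * (θ / (m + 1)) := by
          refine ENNReal.mul_lt_mul_left hθm0 ?_ ?_
          · exact (ENNReal.div_lt_top hθtop (by simp [ENNReal.add_eq_top])).ne
          · exact ENNReal.lt_add_right (by simp) one_ne_zero
      _ ≤ θ := by
          have : ((m : ℝ≥0∞) + 1) = ((m + 1 : ℕ) : ℝ≥0∞) := by push_cast; ring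
          rw [this]
          exact ENNReal.mul_div_le
  -- pointwise bound off the good set
  have hptw : ∀ x, ENNReal.ofReal (dist (f x) (g x) ^ p) ≤
      C2 * (F x + ENNReal.ofReal ((R:ℝ) ^ p)) := by
    intro x
    have h1 : dist (f x) (g x) ≤ dist (f x) a + (R : ℝ) := by
      have h := hgR x
      calc dist (f x) (g x) ≤ dist (f x) a + dist a (g x) := dist_triangle _ _ _
        _ ≤ dist (f x) a + (R : ℝ) := by linarith
    have h2 : dist (f x) (g x) ^ p ≤ (dist (f x) a + (R:ℝ)) ^ p :=
      Real.rpow_le_rpow dist_nonneg h1 hp0.le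
    have h3 : (dist (f x) a + (R:ℝ)) ^ p ≤ 2 ^ p * (dist (f x) a ^ p + (R:ℝ) ^ p) :=
      rpow_add_le_aux dist_nonneg R.coe_nonneg hp0.le
    calc ENNReal.ofReal (dist (f x) (g x) ^ p)
        ≤ ENNReal.ofReal (2 ^ p * (dist (f x) a ^ p + (R:ℝ) ^ p)) :=
          ENNReal.ofReal_le_ofReal (h2.trans h3)
      _ = C2 * (F x + ENNReal.ofReal ((R:ℝ) ^ p)) := by
          rw [ENNReal.ofReal_mul (Real.rpow_nonneg (by norm_num) p),
            ENNReal.ofReal_add (Real.rpow_nonneg dist_nonneg p)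
              (Real.rpow_nonneg R.coe_nonneg p)]
  -- split the integral
  have hsplit : (∫⁻ x in Ω, ENNReal.ofReal (dist (f x) (g x) ^ p)) ≤
      (∫⁻ x in Ω ∩ G, ENNReal.ofReal (dist (f x) (g x) ^ p)) +
      (∫⁻ x in Ω \ G, ENNReal.ofReal (dist (f x) (g x) ^ p)) := by
    refine le_trans (lintegral_mono_set ?_) (lintegral_union_le _ _ _)
    intro x hx
    by_cases hxG : x ∈ G
    · exact Or.inl ⟨hx, hxG⟩
    · exact Or.inr ⟨hx, hxG⟩
  -- good part
  have hterm1 : (∫⁻ x in Ω ∩ G, ENNReal.ofReal (dist (f x) (g x) ^ p)) < E / 2 := by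
    have heq : (∫⁻ x in Ω ∩ G, ENNReal.ofReal (dist (f x) (g x) ^ p)) =
        ∫⁻ x in Ω ∩ G, ENNReal.ofReal (dist (f x) (s x) ^ p) := by
      refine setLIntegral_congr_fun (hΩo.measurableSet.inter hGmeas)
        (fun x hx => ?_)
      rw [hgs x hx.2]
    rw [heq]
    exact lt_of_le_of_lt (lintegral_mono_set inter_subset_left) hs
  -- bad part
  have hbadmeas : MeasurableSet (Ω \ G) := hΩo.measurableSet.diff hGmeas
  have hT2 : (∫⁻ x in Ω \ G, F x) < X := by
    have hresmeas : (volume.restrict Ω) (Ω \ G) < δ₀ := by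
      rw [Measure.restrict_apply hbadmeas, inter_eq_left.mpr diff_subset] at *
      exact lt_of_lt_of_le hmeasG (min_le_left _ _)
    have h := hδabs (Ω \ G) hresmeas
    rwa [Measure.restrict_restrict hbadmeas, inter_eq_left.mpr diff_subset] at h
  have hterm2 : (∫⁻ x in Ω \ G, ENNReal.ofReal (dist (f x) (g x) ^ p)) ≤ E / 2 := by
    have hrw : (∫⁻ x in Ω \ G, ENNReal.ofReal (dist (f x) (g x) ^ p)) ≤
        C2 * ((∫⁻ x in Ω \ G, F x) + ENNReal.ofReal ((R:ℝ) ^ p) * volume (Ω \ G)) := by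
      calc (∫⁻ x in Ω \ G, ENNReal.ofReal (dist (f x) (g x) ^ p))
          ≤ ∫⁻ x in Ω \ G, C2 * (F x + ENNReal.ofReal ((R:ℝ) ^ p)) :=
            lintegral_mono fun x => hptw x
        _ = C2 * ∫⁻ x in Ω \ G, (F x + ENNReal.ofReal ((R:ℝ) ^ p)) :=
            lintegral_const_mul C2 (hFmeas.add measurable_const)
        _ = C2 * ((∫⁻ x in Ω \ G, F x) + ENNReal.ofReal ((R:ℝ) ^ p) * volume (Ω \ G)) := by
            rw [lintegral_add_right _ measurable_const, setLIntegral_const]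
    refine le_trans hrw ?_
    have hvol : ENNReal.ofReal ((R:ℝ) ^ p) * volume (Ω \ G) ≤
        (ENNReal.ofReal ((R:ℝ) ^ p) + 1) * η₄ :=
      mul_le_mul' le_self_add (le_of_lt (lt_of_lt_of_le hmeasG (min_le_right _ _)))
    have hvol2 : ENNReal.ofReal ((R:ℝ) ^ p) * volume (Ω \ G) ≤ X :=
      le_trans hvol ENNReal.mul_div_le
    calc C2 * ((∫⁻ x in Ω \ G, F x) + ENNReal.ofReal ((R:ℝ) ^ p) * volume (Ω \ G))
        ≤ C2 * (X + X) := by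
          refine mul_le_mul' le_rfl (add_le_add hT2.le hvol2)
      _ = C2 * X + C2 * X := by rw [mul_add]
      _ ≤ E / 2 / 2 + E / 2 / 2 := by
          refine add_le_add ?_ ?_ <;>
          · rw [hX]
            exact ENNReal.mul_div_le
      _ = E / 2 := ENNReal.add_halves _
  -- combine
  calc (∫⁻ x in Ω, ENNReal.ofReal (dist (f x) (g x) ^ p))
      ≤ (∫⁻ x in Ω ∩ G, ENNReal.ofReal (dist (f x) (g x) ^ p)) +
        (∫⁻ x in Ω \ G, ENNReal.ofReal (dist (f x) (g x) ^ p)) := hsplit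
    _ ≤ (∫⁻ x in Ω ∩ G, ENNReal.ofReal (dist (f x) (g x) ^ p)) + E / 2 :=
        add_le_add le_rfl hterm2
    _ < E / 2 + E / 2 := by
        refine ENNReal.add_lt_add_right ?_ hterm1
        exact (ENNReal.div_lt_top hEtop (by norm_num)).ne
    _ = E := ENNReal.add_halves _

end AuxLemmas
end
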